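/- Let n = 2 and a ∈ Sym(2,ℂ) with Re(a) satisfying α₀|ξ|² ≤ ξ·Re(a)ξ for all ξ ∈ ℝ², some α₀ > 0. Suppose the quadratic form p(ξ) = aξ·ξ factors as p(ξ) = (l·ξ)² for some l = l_r + i l_i ∈ ℂ². Then Re(p(ξ)) = (l_r·ξ)² − (l_i·ξ)², which cannot be positive definite on ℝ²; hence p admits no such factorization and the quadratic τ ↦ p(ξ+τN) has no double root with ξ+τN ≠ 0 for ξ, N ∈ ℝ² \ {0}. -/

import Mathlib

open scoped BigOperators

/-- If the quadratic form of an elliptic symmetric `a` factors as a square, contradiction. -/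
lemma aux_no_factor
    (a : Matrix (Fin 2) (Fin 2) ℂ)
    (α₀ : ℝ) (hα₀ : 0 < α₀)
    (ha_ell : ∀ ξ : Fin 2 → ℝ, α₀ * (∑ i, ξ i ^ 2) ≤ ∑ i, ∑ j, (a i j).re * ξ i * ξ j)
    (l : Fin 2 → ℂ)
    (hl : ∀ ξ : Fin 2 → ℂ, (∑ i, ∑ j, a i j * ξ i * ξ j) = (∑ i, l i * ξ i) ^ 2) :
    False := by
  have key : ∀ η : Fin 2 → ℝ,
      (∑ i, ∑ j, (a i j).re * η i * η j)
        = (∑ i, (l i).re * η i) ^ 2 - (∑ i, (l i).im * η i) ^ 2 := by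
    intro η
    have h := congrArg Complex.re (hl fun i => (η i : ℂ))
    simp only [Fin.sum_univ_two, pow_two, Complex.add_re, Complex.mul_re, Complex.mul_im,
      Complex.add_im, Complex.ofReal_re, Complex.ofReal_im] at h ⊢
    linear_combination h
  set c0 : ℝ := (l 0).re - (l 0).im with hc0
  set c1 : ℝ := (l 1).re - (l 1).im with hc1
  by_cases hc : c0 = 0 ∧ c1 = 0
  · have h1 := ha_ell ![1, 0]
    have h2 := key ![1, 0]
    simp [Fin.sum_univ_two] at h1 h2
    have hz : (l 0).re ^ 2 - (l 0).im ^ 2 = 0 := by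
      linear_combination ((l 0).re + (l 0).im) * hc.1
    linarith
  · have hc' : c0 ≠ 0 ∨ c1 ≠ 0 := by tauto
    have h1 := ha_ell ![c1, -c0]
    have h2 := key ![c1, -c0]
    have hz : (∑ i, (l i).re * (![c1, -c0] : Fin 2 → ℝ) i) ^ 2
        - (∑ i, (l i).im * (![c1, -c0] : Fin 2 → ℝ) i) ^ 2 = 0 := by
      simp only [Fin.sum_univ_two, hc0, hc1, Matrix.cons_val_zero, Matrix.cons_val_one,
        Matrix.head_cons]
      ring
    rw [hz] at h2
    simp [Fin.sum_univ_two] at h1 h2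
    rcases hc' with h | h <;>
      nlinarith [sq_nonneg c0, sq_nonneg c1, sq_pos_of_ne_zero h]

/-- (Lemma 4.2, case `n = 2`.) Let `a ∈ Sym(2,ℂ)` with `α₀|ξ|² ≤ ξ·Re(a)ξ` on `ℝ²` and
`p(ξ) = aξ·ξ`. If `p` factors as `p(ξ) = (l·ξ)²` then `Re p(ξ) = (l_r·ξ)² − (l_i·ξ)²` on `ℝ²`,
which is not positive definite; hence no such factorization exists, and the quadratic
`τ ↦ p(ξ + τN)` has no double root `τ₀` with `ξ + τ₀N ≠ 0` for nonzero `ξ, N ∈ ℝ²`. -/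
theorem no_double_root_dim_two
    (a : Matrix (Fin 2) (Fin 2) ℂ) (ha_symm : ∀ i j, a i j = a j i)
    (α₀ : ℝ) (hα₀ : 0 < α₀)
    (ha_ell : ∀ ξ : Fin 2 → ℝ, α₀ * (∑ i, ξ i ^ 2) ≤ ∑ i, ∑ j, (a i j).re * ξ i * ξ j) :
    (∀ l : Fin 2 → ℂ,
      (∀ ξ : Fin 2 → ℂ, (∑ i, ∑ j, a i j * ξ i * ξ j) = (∑ i, l i * ξ i) ^ 2) →
      ∀ ξ : Fin 2 → ℝ,
        (∑ i, ∑ j, a i j * (ξ i : ℂ) * (ξ j : ℂ)).re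
          = (∑ i, (l i).re * ξ i) ^ 2 - (∑ i, (l i).im * ξ i) ^ 2 ∧
        ¬ (∀ η : Fin 2 → ℝ, η ≠ 0 →
            0 < (∑ i, (l i).re * η i) ^ 2 - (∑ i, (l i).im * η i) ^ 2)) ∧
    (¬ ∃ l : Fin 2 → ℂ,
      ∀ ξ : Fin 2 → ℂ, (∑ i, ∑ j, a i j * ξ i * ξ j) = (∑ i, l i * ξ i) ^ 2) ∧
    (∀ ξ N : Fin 2 → ℝ, ξ ≠ 0 → N ≠ 0 → ∀ τ₀ : ℂ,
      (∑ i, ∑ j, a i j * ((ξ i : ℂ) + τ₀ * (N i : ℂ)) * ((ξ j : ℂ) + τ₀ * (N j : ℂ))) = 0 →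
      deriv (fun τ : ℂ =>
        ∑ i, ∑ j, a i j * ((ξ i : ℂ) + τ * (N i : ℂ)) * ((ξ j : ℂ) + τ * (N j : ℂ))) τ₀ = 0 →
      ∀ i, (ξ i : ℂ) + τ₀ * (N i : ℂ) = 0) := by
  refine ⟨fun l hl ξ => (aux_no_factor a α₀ hα₀ ha_ell l hl).elim,
    fun ⟨l, hl⟩ => aux_no_factor a α₀ hα₀ ha_ell l hl, ?_⟩
  intro ξ N hξ hN τ₀ h0 h1 i
  set A : ℂ := ∑ i, ∑ j, a i j * (N i : ℂ) * (N j : ℂ) with hA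
  set B : ℂ := ∑ i, ∑ j, a i j * ((ξ i : ℂ) * (N j : ℂ) + (N i : ℂ) * (ξ j : ℂ)) with hB
  set C : ℂ := ∑ i, ∑ j, a i j * (ξ i : ℂ) * (ξ j : ℂ) with hC
  have hfun : (fun τ : ℂ =>
      ∑ i, ∑ j, a i j * ((ξ i : ℂ) + τ * (N i : ℂ)) * ((ξ j : ℂ) + τ * (N j : ℂ)))
      = fun τ : ℂ => A * τ ^ 2 + B * τ + C := by
    funext τ
    simp only [hA, hB, hC, Fin.sum_univ_two]
    ring
  -- derivative
  have hd : HasDerivAt (fun τ : ℂ => A * τ ^ 2 + B * τ + C) (A * (2 * τ₀) + B) τ₀ := by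
    have d1 := (hasDerivAt_pow 2 τ₀).const_mul A
    have d2 := (hasDerivAt_id τ₀).const_mul B
    have h := (d1.add d2).add_const C
    norm_num at h
    exact h.add_const C
  rw [hfun] at h1
  rw [hd.deriv] at h1
  have h0' : A * τ₀ ^ 2 + B * τ₀ + C = 0 := by
    rw [← h0]
    simp only [hA, hB, hC, Fin.sum_univ_two]
    ring
  have hBe : B = -2 * A * τ₀ := by linear_combination h1
  have hCe : C = A * τ₀ ^ 2 := by linear_combination h0' - τ₀ * h1
  set u : ℝ := τ₀.re with hu
  set v : ℝ := τ₀.im with hv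
  have hτ : (u : ℂ) + (v : ℂ) * Complex.I = τ₀ := Complex.re_add_im τ₀
  have hval : A * (u : ℂ) ^ 2 + B * (u : ℂ) + C = -A * (v : ℂ) ^ 2 := by
    rw [hBe, hCe, ← hτ]
    linear_combination A * (v : ℂ) ^ 2 * Complex.I_sq
  -- real part identity for the real vector η = ξ + u N
  have hre : (∑ i, ∑ j, (a i j).re * (ξ i + u * N i) * (ξ j + u * N j)) = -A.re * v ^ 2 := by
    have h2 : (∑ i, ∑ j, a i j * ((ξ i : ℂ) + (u : ℂ) * (N i : ℂ))
        * ((ξ j : ℂ) + (u : ℂ) * (N j : ℂ))) = -A * (v : ℂ) ^ 2 := by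
      have := congrFun hfun (u : ℂ)
      rw [this, hval]
    have h3 := congrArg Complex.re h2
    simp only [Fin.sum_univ_two, Complex.add_re, Complex.mul_re, Complex.mul_im,
      Complex.add_im, Complex.ofReal_re, Complex.ofReal_im, Complex.neg_re, Complex.neg_im,
      Complex.mul_im, pow_two] at h3 ⊢
    linear_combination h3
  have hAre : A.re = ∑ i, ∑ j, (a i j).re * N i * N j := by
    simp only [hA, Fin.sum_univ_two, Complex.add_re, Complex.mul_re,
      Complex.ofReal_re, Complex.ofReal_im, Complex.mul_im]
    ring
  have hNpos : 0 < N 0 ^ 2 + N 1 ^ 2 := by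
    by_contra hpos
    push_neg at hpos
    have e0 : N 0 = 0 := by nlinarith [sq_nonneg (N 0), sq_nonneg (N 1)]
    have e1 : N 1 = 0 := by nlinarith [sq_nonneg (N 0), sq_nonneg (N 1)]
    exact hN (funext fun j => by fin_cases j <;> simpa)
  have hApos : 0 < A.re := by
    have := ha_ell N
    rw [← hAre] at this
    simp only [Fin.sum_univ_two] at this
    nlinarith
  have hell := ha_ell fun i => ξ i + u * N i
  rw [hre] at hell
  simp only [Fin.sum_univ_two] at hell
  have hv0 : v = 0 := by
    by_contra hvne
    have h2 : 0 < v ^ 2 := sq_pos_of_ne_zero hvne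
    nlinarith [sq_nonneg (ξ 0 + u * N 0), sq_nonneg (ξ 1 + u * N 1), mul_pos hApos h2]
  rw [hv0] at hell
  have h20 : (ξ 0 + u * N 0) ^ 2 = 0 := by
    nlinarith [sq_nonneg (ξ 0 + u * N 0), sq_nonneg (ξ 1 + u * N 1)]
  have h21 : (ξ 1 + u * N 1) ^ 2 = 0 := by
    nlinarith [sq_nonneg (ξ 0 + u * N 0), sq_nonneg (ξ 1 + u * N 1)]
  have e0 : ξ 0 + u * N 0 = 0 := sq_eq_zero_iff.mp h20
  have e1 : ξ 1 + u * N 1 = 0 := sq_eq_zero_iff.mp h21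
  have hτ0 : τ₀ = (u : ℂ) := by rw [← hτ, hv0]; simp
  rw [hτ0]
  fin_cases i
  · exact_mod_cast e0
  · exact_mod_cast e1
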